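/- Let f be an irreducible monic integer polynomial of degree 4 with constant term 1 and roots λ_1, λ_2, λ_3, λ_4, all of absolute value ≠ 1, such that the multiplicative group generated by the roots has rank 2. Then, possibly after reordering the roots and replacing each root by a fixed positive power, the roots satisfy λ_1λ_2 = 1 and λ_3λ_4 = 1. -/

import Mathlib

open Polynomial

/-- Let `f` be an irreducible monic integer polynomial of degree 4 with
constant term 1, roots `lam 0, …, lam 3` all of absolute value ≠ 1, such that the
multiplicative group generated by the roots has rank 2 (there are two ℤ-independent
elements, and any three elements are ℤ-dependent). Then after reordering the roots and
replacing each root by a fixed positive power `u`, they satisfy `(lam 0 * lam 1)^u = 1`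
and `(lam 2 * lam 3)^u = 1`. -/
theorem stmt11 (f : Polynomial ℤ) (hf : f.Monic) (hdeg : f.natDegree = 4)
    (hirr : Irreducible (f.map (Int.castRingHom ℚ)))
    (hconst : f.coeff 0 = 1)
    (lam : Fin 4 → ℂ)
    (hroots : (f.map (Int.castRingHom ℂ)).roots = Multiset.map lam Finset.univ.val)
    (habs : ∀ i, ‖lam i‖ ≠ 1)
    (hrank_ge : ∃ a b : ℂˣ,
      a ∈ Subgroup.closure {u : ℂˣ | (u : ℂ) ∈ (f.map (Int.castRingHom ℂ)).roots} ∧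
      b ∈ Subgroup.closure {u : ℂˣ | (u : ℂ) ∈ (f.map (Int.castRingHom ℂ)).roots} ∧
      ∀ p q : ℤ, a ^ p * b ^ q = 1 → p = 0 ∧ q = 0)
    (hrank_le : ∀ a b c : ℂˣ,
      a ∈ Subgroup.closure {u : ℂˣ | (u : ℂ) ∈ (f.map (Int.castRingHom ℂ)).roots} →
      b ∈ Subgroup.closure {u : ℂˣ | (u : ℂ) ∈ (f.map (Int.castRingHom ℂ)).roots} →
      c ∈ Subgroup.closure {u : ℂˣ | (u : ℂ) ∈ (f.map (Int.castRingHom ℂ)).roots} →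
      ∃ p q r : ℤ, (p ≠ 0 ∨ q ≠ 0 ∨ r ≠ 0) ∧ a ^ p * b ^ q * c ^ r = 1) :
    ∃ u : ℕ, 0 < u ∧ ∃ π : Equiv.Perm (Fin 4),
      (lam (π 0) * lam (π 1)) ^ u = 1 ∧ (lam (π 2) * lam (π 3)) ^ u = 1 := by
  classical
  set F : Polynomial ℂ := f.map (Int.castRingHom ℂ) with hFdef
  set fQ : Polynomial ℚ := f.map (Int.castRingHom ℚ) with hfQdef
  have hfQm : fQ.Monic := hf.map _
  have hFm : F.Monic := hf.map _
  have hF0 : F ≠ 0 := hFm.ne_zero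
  have hFQmap : F = fQ.map (algebraMap ℚ ℂ) := by
    rw [hfQdef, hFdef, Polynomial.map_map,
      RingHom.ext_int (Int.castRingHom ℂ) ((algebraMap ℚ ℂ).comp (Int.castRingHom ℚ))]
  have hmem : ∀ i, lam i ∈ F.roots := by
    intro i
    rw [hroots]
    exact Multiset.mem_map_of_mem _ (Finset.mem_univ_val _)
  have hroot : ∀ i, F.IsRoot (lam i) := fun i => isRoot_of_mem_roots (hmem i)
  have haev : ∀ i, Polynomial.aeval (lam i) fQ = 0 := by
    intro i
    have := hroot i
    rwa [hFQmap, Polynomial.IsRoot, Polynomial.eval_map, ← Polynomial.aeval_def] at this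
  have hne : ∀ i, lam i ≠ 0 := by
    intro i h
    have h1 : F.eval 0 = 1 := by
      rw [hFdef, Polynomial.eval_map, Polynomial.eval₂_at_zero]
      simp [hconst]
    have := hroot i
    rw [h, Polynomial.IsRoot, h1] at this
    exact one_ne_zero this
  have hmin : ∀ i, minpoly ℚ (lam i) = fQ :=
    fun i => (minpoly.eq_of_irreducible_of_monic hirr (haev i) hfQm).symm
  have hint : ∀ i, IsIntegral ℚ (lam i) := fun i => ⟨fQ, hfQm, haev i⟩
  have hinj : Function.Injective lam := by
    have hsep : F.Separable := by
      rw [hFQmap]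
      exact (hirr.separable).map
    have hnd := (Polynomial.nodup_roots hsep)
    rw [hroots] at hnd
    intro i j h
    exact Multiset.inj_on_of_nodup_map hnd i (Finset.mem_univ_val _) j (Finset.mem_univ_val _) h
  -- units
  set Λ : Fin 4 → ℂˣ := fun i => Units.mk0 (lam i) (hne i) with hΛdef
  have hΛval : ∀ i, (Λ i : ℂ) = lam i := fun i => rfl
  have hset : {u : ℂˣ | (u : ℂ) ∈ F.roots} = Set.range Λ := by
    ext u
    simp only [Set.mem_setOf_eq, hroots, Multiset.mem_map, Set.mem_range]
    constructor
    · rintro ⟨i, -, hi⟩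
      exact ⟨i, Units.ext hi⟩
    · rintro ⟨i, rfl⟩
      exact ⟨i, Finset.mem_univ_val _, rfl⟩
  set P : (Fin 4 → ℤ) → ℂˣ := fun e => ∏ k, Λ k ^ e k with hPdef
  have hPadd : ∀ e e', P (e + e') = P e * P e' := by
    intro e e'
    simp only [hPdef, Pi.add_apply, zpow_add]
    exact Finset.prod_mul_distrib
  have hPsmul : ∀ (n : ℤ) e, P (n • e) = P e ^ n := by
    intro n e
    simp only [hPdef, Pi.smul_apply, smul_eq_mul]
    calc ∏ k, Λ k ^ (n * e k) = ∏ k, (zpowGroupHom n) (Λ k ^ e k) := by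
          refine Finset.prod_congr rfl (fun k _ => ?_)
          simp only [zpowGroupHom, MonoidHom.coe_mk, OneHom.coe_mk, ← zpow_mul]
          rw [mul_comm]
      _ = (zpowGroupHom n) (∏ k, Λ k ^ e k) := (map_prod _ _ _).symm
      _ = (∏ k, Λ k ^ e k) ^ n := rfl
  have hclos : ∀ a ∈ Subgroup.closure (Set.range Λ), ∃ e, P e = a := by
    intro a ha
    refine Subgroup.closure_induction ?_ ?_ ?_ ?_ ha
    · rintro x ⟨i, rfl⟩
      refine ⟨Pi.single i (1:ℤ), ?_⟩
      rw [hPdef]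
      have : ∀ k, Λ k ^ ((Pi.single i (1:ℤ) : Fin 4 → ℤ) k) = if k = i then Λ i else 1 := by
        intro k
        rcases eq_or_ne k i with rfl | h
        · simp
        · simp [Pi.single_eq_of_ne h, h]
      simp only [this]
      simp
    · exact ⟨0, by simp [hPdef]⟩
    · rintro x y - - ⟨e, rfl⟩ ⟨e', rfl⟩
      exact ⟨e + e', hPadd e e'⟩
    · rintro x - ⟨e, rfl⟩
      refine ⟨-e, ?_⟩
      have := hPsmul (-1) e
      simpa using this
  -- product of all roots is 1
  have honev : P (fun _ => 1) = 1 := by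
    have hsplit : F.Splits := IsAlgClosed.splits F
    have hdeg' : F.natDegree = 4 := by rw [hFdef, hf.natDegree_map]; exact hdeg
    have hc0 : F.coeff 0 = 1 := by
      rw [hFdef, Polynomial.coeff_map, hconst]; simp
    have := hsplit.coeff_zero_eq_prod_roots_of_monic hFm
    rw [hc0, hdeg'] at this
    have hprod : F.roots.prod = 1 := by
      norm_num at this
      exact this.symm
    apply Units.ext
    rw [hPdef]
    simp only [zpow_one]
    calc ((∏ k, Λ k : ℂˣ) : ℂ) = ∏ k, lam k := by
          rw [← Units.coeHom_apply, map_prod]; rfl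
      _ = 1 := by
          rw [Finset.prod_eq_multiset_prod, ← hroots, hprod]
  -- value of P in ℂ
  have hPval : ∀ e : Fin 4 → ℤ, ((P e : ℂˣ) : ℂ) = ∏ k, lam k ^ e k := by
    intro e
    rw [hPdef, ← Units.coeHom_apply, map_prod]
    refine Finset.prod_congr rfl fun k _ => ?_
    rw [Units.coeHom_apply, Units.val_zpow_eq_zpow_val, hΛval]
  have hP1 : ∀ e : Fin 4 → ℤ, P e = 1 ↔ ∏ k, lam k ^ e k = 1 := by
    intro e
    rw [← hPval e, Units.val_eq_one]
  -- Galois conjugation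
  have key : ∀ i j : Fin 4, ∃ σ : Equiv.Perm (Fin 4), σ i = j ∧
      ∀ e : Fin 4 → ℤ, P e = 1 → P (fun k => e (σ⁻¹ k)) = 1 := by
    intro i j
    set K := IntermediateField.adjoin ℚ (Set.range lam) with hKdef
    have hK : ∀ s ∈ Set.range lam, IsIntegral ℚ s ∧ ((minpoly ℚ s).map (algebraMap ℚ ℂ)).Splits := by
      rintro s ⟨k, rfl⟩
      exact ⟨hint k, IsAlgClosed.splits _⟩
    have hx : lam i ∈ K := IntermediateField.subset_adjoin _ _ ⟨i, rfl⟩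
    have hy : Polynomial.aeval (lam j) (minpoly ℚ (lam i)) = 0 := by
      rw [hmin i]; exact haev j
    obtain ⟨φ, hφ⟩ := IntermediateField.exists_algHom_adjoin_of_splits_of_aeval hK hx hy
    have hmemK : ∀ k, lam k ∈ K := fun k => IntermediateField.subset_adjoin _ _ ⟨k, rfl⟩
    set μ : Fin 4 → K := fun k => ⟨lam k, hmemK k⟩ with hμdef
    have hval : ∀ k, K.val (μ k) = lam k := fun k => rfl
    have hμaev : ∀ k, Polynomial.aeval (μ k) fQ = 0 := by
      intro k
      have h1 : Polynomial.aeval (K.val (μ k)) fQ = K.val (Polynomial.aeval (μ k) fQ) :=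
        Polynomial.aeval_algHom_apply K.val (μ k) fQ
      rw [hval, haev k] at h1
      have h0 : K.val (Polynomial.aeval (μ k) fQ) = K.val 0 := by
        rw [map_zero, ← h1]
      exact K.val.injective h0
    have hφroot : ∀ k, ∃ m, lam m = φ (μ k) := by
      intro k
      have h2 : Polynomial.aeval (φ (μ k)) fQ = 0 := by
        rw [Polynomial.aeval_algHom_apply φ (μ k) fQ, hμaev k, map_zero]
      have h3 : φ (μ k) ∈ F.roots := by
        refine Polynomial.mem_roots'.mpr ⟨hF0, ?_⟩
        rw [hFQmap, Polynomial.IsRoot, Polynomial.eval_map, ← Polynomial.aeval_def]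
        exact h2
      rw [hroots] at h3
      obtain ⟨m, -, hm⟩ := Multiset.mem_map.mp h3
      exact ⟨m, hm⟩
    choose g hg using hφroot
    have hginj : Function.Injective g := by
      intro k k' h
      apply hinj
      have h4 : φ (μ k) = φ (μ k') := by rw [← hg k, ← hg k', h]
      have h5 : μ k = μ k' := φ.injective h4
      exact congrArg Subtype.val h5
    let σ : Equiv.Perm (Fin 4) := Equiv.ofBijective g (Finite.injective_iff_bijective.mp hginj)
    have hσapp : ∀ k, σ k = g k := fun k => rfl
    refine ⟨σ, hinj (by rw [hσapp, hg i]; exact hφ), ?_⟩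
    intro e he
    rw [hP1] at he
    -- the relation holds inside K
    have heK : ∏ k, μ k ^ e k = 1 := by
      have h7 : K.val (∏ k, μ k ^ e k) = K.val 1 := by
        rw [map_prod, map_one, ← he]
        exact Finset.prod_congr rfl fun k _ => by rw [map_zpow₀, hval]
      exact K.val.injective h7
    -- push through φ
    have heφ : ∏ k, lam (g k) ^ e k = 1 := by
      have h6 := congrArg φ heK
      rw [map_prod, map_one] at h6
      rw [← h6]
      exact Finset.prod_congr rfl fun k _ => by rw [map_zpow₀, hg k]
    rw [hP1]
    calc ∏ k, lam k ^ e (σ⁻¹ k)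
        = ∏ k, lam (σ k) ^ e (σ⁻¹ (σ k)) := (Equiv.prod_comp σ (fun m => lam m ^ e (σ⁻¹ m))).symm
      _ = ∏ k, lam (g k) ^ e k := Finset.prod_congr rfl fun k _ => by
            rw [Equiv.Perm.inv_def, Equiv.symm_apply_apply, hσapp]
      _ = 1 := heφ
  -- extract generators of rank ≥ 2
  obtain ⟨a, b, ha, hb, hab⟩ := hrank_ge
  rw [hset] at ha hb
  obtain ⟨α, hα⟩ := hclos a ha
  obtain ⟨β, hβ⟩ := hclos b hb
  have hΛmem : ∀ k, Λ k ∈ Subgroup.closure {u : ℂˣ | (u:ℂ) ∈ F.roots} := by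
    intro k; rw [hset]; exact Subgroup.subset_closure ⟨k, rfl⟩
  obtain ⟨p, q, r, hpqr, hrel⟩ := hrank_le (Λ 0) (Λ 1) (Λ 2) (hΛmem 0) (hΛmem 1) (hΛmem 2)
  set v : Fin 4 → ℤ := ![p, q, r, 0] with hvdef
  have hPv : P v = 1 := by
    show (∏ k, Λ k ^ v k) = 1
    rw [Fin.prod_univ_four]
    show Λ 0 ^ p * Λ 1 ^ q * Λ 2 ^ r * Λ 3 ^ (0:ℤ) = 1
    rw [zpow_zero, mul_one]; exact hrel
  set onev : Fin 4 → ℤ := fun _ => 1 with honevdef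
  have hcomb : ∀ (m n : ℤ) (e e' : Fin 4 → ℤ), P e = 1 → P e' = 1 → P (m • e + n • e') = 1 := by
    intro m n e e' h h'
    rw [hPadd, hPsmul, hPsmul, h, h', one_zpow, one_zpow, one_mul]
  set s : ℤ := ∑ k, v k with hsdef
  set w : Fin 4 → ℤ := (4:ℤ) • v + (-s) • onev with hwdef
  have hwapp : ∀ k, w k = 4 * v k - s := by
    intro k
    rw [hwdef]
    simp only [Pi.add_apply, Pi.smul_apply, smul_eq_mul, honevdef, mul_one]
    ring
  have hw : P w = 1 := hcomb _ _ _ _ hPv honev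
  have hwsum : ∑ k, w k = 0 := by
    simp only [hwapp]
    rw [Finset.sum_sub_distrib, ← Finset.mul_sum, ← hsdef, Finset.sum_const]
    simp
  have hw0 : ∃ i₀, w i₀ ≠ 0 := by
    by_contra h
    push_neg at h
    have h3 := h 3
    rw [hwapp] at h3
    have hv3 : v 3 = 0 := rfl
    rw [hv3] at h3
    have hs0 : s = 0 := by omega
    have hv0 : ∀ k, v k = 0 := by
      intro k
      have hk := h k
      rw [hwapp, hs0] at hk
      omega
    rcases hpqr with h' | h' | h'
    · exact h' (hv0 0)
    · exact h' (hv0 1)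
    · exact h' (hv0 2)
  obtain ⟨i₀, hi₀⟩ := hw0
  set d : ℤ := w i₀ with hddef
  -- the key dichotomy
  have step : ∀ j : Fin 4, w j = d ∨ w j = -d := by
    intro j
    obtain ⟨σ, hσ, htr⟩ := key i₀ j
    set w' : Fin 4 → ℤ := fun k => w (σ⁻¹ k) with hw'def
    have hw'P : P w' = 1 := htr w hw
    have hw'j : w' j = d := by
      show w (σ⁻¹ j) = d
      rw [← hσ, Equiv.Perm.inv_def, Equiv.symm_apply_apply]
    have hw'sum : ∑ k, w' k = 0 := by
      show ∑ k, w (σ⁻¹ k) = 0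
      rw [Equiv.sum_comp σ⁻¹ w]
      exact hwsum
    have hw'i : w' (σ i₀) = d := by
      show w (σ⁻¹ (σ i₀)) = d
      rw [Equiv.Perm.inv_def, Equiv.symm_apply_apply]
    -- five vectors must be dependent
    have hdep : ¬ LinearIndependent ℤ ![onev, w, w', α, β] := by
      intro hli
      have h5 := hli.fintype_card_le_finrank
      rw [Module.finrank_pi] at h5
      simp at h5
    obtain ⟨c, hcsum, ic, hic⟩ := Fintype.not_linearIndependent_iff.mp hdep
    rw [Fin.sum_univ_five] at hcsum
    have hcpt : ∀ k, c 0 * onev k + c 1 * w k + c 2 * w' k + c 3 * α k + c 4 * β k = 0 := by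
      intro k
      have h6 := congrFun hcsum k
      simpa using h6
    -- c 3 = c 4 = 0
    have h34 : a ^ (c 3) * b ^ (c 4) = 1 := by
      rw [← hα, ← hβ, ← hPsmul, ← hPsmul, ← hPadd]
      have heq : (c 3) • α + (c 4) • β
          = (-(c 0)) • onev + ((-(c 1)) • w + (-(c 2)) • w') := by
        funext k
        have h7 := hcpt k
        simp only [Pi.add_apply, Pi.smul_apply, smul_eq_mul]
        linarith [h7]
      rw [heq, hPadd, hPadd, hPsmul, hPsmul, hPsmul, hw'P, hw, honev]
      simp
    obtain ⟨hc3, hc4⟩ := hab _ _ h34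
    have hcpt2 : ∀ k, c 0 + c 1 * w k + c 2 * w' k = 0 := by
      intro k
      have h7 := hcpt k
      rw [hc3, hc4] at h7
      simp only [zero_mul, add_zero] at h7
      have honk : onev k = 1 := rfl
      rw [honk, mul_one] at h7
      linarith
    have hc0 : c 0 = 0 := by
      have h8 : ∑ k : Fin 4, (c 0 + c 1 * w k + c 2 * w' k) = 0 :=
        Finset.sum_eq_zero fun k _ => hcpt2 k
      rw [Finset.sum_add_distrib, Finset.sum_add_distrib, ← Finset.mul_sum, ← Finset.mul_sum,
        hwsum, hw'sum, Finset.sum_const] at h8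
      simpa using h8
    have hcpt3 : ∀ k, c 1 * w k + c 2 * w' k = 0 := by
      intro k
      have h7 := hcpt2 k
      rw [hc0] at h7
      linarith
    have hc12 : c 1 ≠ 0 ∨ c 2 ≠ 0 := by
      fin_cases ic
      · exact absurd hc0 hic
      · exact Or.inl hic
      · exact Or.inr hic
      · exact absurd hc3 hic
      · exact absurd hc4 hic
    have hc2 : c 2 ≠ 0 := by
      intro h9
      have h10 := hcpt3 i₀
      rw [h9] at h10
      simp only [zero_mul, add_zero] at h10
      have hc1 : c 1 = 0 := by
        rcases mul_eq_zero.mp h10 with h | h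
        · exact h
        · exact absurd h hi₀
      rcases hc12 with h | h
      · exact h hc1
      · exact h h9
    have hc1 : c 1 ≠ 0 := by
      intro h9
      have h10 := hcpt3 (σ i₀)
      rw [h9, hw'i] at h10
      simp only [zero_mul, zero_add] at h10
      rcases mul_eq_zero.mp h10 with h | h
      · exact hc2 h
      · exact hi₀ h
    -- sum of squares
    have hsq : c 1 ^ 2 * (∑ k, (w k) ^ 2) = c 2 ^ 2 * (∑ k, (w k) ^ 2) := by
      have h11 : ∀ k, (c 1 * w k) ^ 2 = (c 2 * w' k) ^ 2 := by
        intro k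
        have h12 : c 1 * w k = -(c 2 * w' k) := by linarith [hcpt3 k]
        rw [h12]; ring
      calc c 1 ^ 2 * (∑ k, (w k) ^ 2) = ∑ k, (c 1 * w k) ^ 2 := by
            rw [Finset.mul_sum]; exact Finset.sum_congr rfl fun k _ => by ring
        _ = ∑ k, (c 2 * w' k) ^ 2 := Finset.sum_congr rfl fun k _ => h11 k
        _ = c 2 ^ 2 * (∑ k, (w' k) ^ 2) := by
            rw [Finset.mul_sum]; exact Finset.sum_congr rfl fun k _ => by ring
        _ = c 2 ^ 2 * (∑ k, (w k) ^ 2) := by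
            rw [hw'def, Equiv.sum_comp σ⁻¹ (fun m => (w m)^2)]
    have hS0 : (∑ k, (w k) ^ 2) ≠ 0 := by
      intro h12
      have := (Finset.sum_eq_zero_iff_of_nonneg (fun k _ => sq_nonneg (w k))).mp h12 i₀
        (Finset.mem_univ _)
      exact hi₀ (sq_eq_zero_iff.mp this)
    have hc1c2 : c 1 ^ 2 = c 2 ^ 2 := mul_right_cancel₀ hS0 hsq
    have h13 := hcpt3 j
    rw [hw'j] at h13
    rcases mul_eq_zero.mp (show (c 1 - c 2) * (c 1 + c 2) = 0 by
        have : (c 1 - c 2) * (c 1 + c 2) = c 1 ^ 2 - c 2 ^ 2 := by ring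
        rw [this, hc1c2]; ring) with h | h
    · -- c 1 = c 2
      right
      have : c 1 * (w j + d) = 0 := by linear_combination h13 + d * h
      rcases mul_eq_zero.mp this with h' | h'
      · exact absurd h' hc1
      · omega
    · -- c 1 = - c 2
      left
      have : c 1 * (w j - d) = 0 := by linear_combination h13 - d * h
      rcases mul_eq_zero.mp this with h' | h'
      · exact absurd h' hc1
      · omega
  -- partition the indices
  set S2 : Finset (Fin 4) := Finset.univ.filter (fun k => w k = d) with hS2def
  set T2 : Finset (Fin 4) := Finset.univ.filter (fun k => ¬ w k = d) with hT2def
  have hcards : S2.card + T2.card = 4 := by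
    rw [hS2def, hT2def, Finset.card_filter_add_card_filter_not]
    simp
  have h1 : ∑ k ∈ S2, w k = (S2.card : ℤ) * d := by
    have h0 : ∑ k ∈ S2, w k = ∑ k ∈ S2, d :=
      Finset.sum_congr rfl (fun k hk => by
        rw [hS2def] at hk; exact (Finset.mem_filter.mp hk).2)
    rw [h0, Finset.sum_const, nsmul_eq_mul]
  have h2 : ∑ k ∈ T2, w k = (T2.card : ℤ) * (-d) := by
    have h0 : ∑ k ∈ T2, w k = ∑ k ∈ T2, (-d) :=
      Finset.sum_congr rfl (fun k hk => by
        rw [hT2def] at hk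
        have hk2 := (Finset.mem_filter.mp hk).2
        rcases step k with h | h
        · exact absurd h hk2
        · exact h)
    rw [h0, Finset.sum_const, nsmul_eq_mul]
  have h3 : ∑ k ∈ S2, w k + ∑ k ∈ T2, w k = 0 := by
    rw [hS2def, hT2def, Finset.sum_filter_add_sum_filter_not]
    exact hwsum
  have hScard : S2.card = 2 ∧ T2.card = 2 := by
    rw [h1, h2] at h3
    have h4 : ((S2.card : ℤ) - T2.card) * d = 0 := by linear_combination h3
    rcases mul_eq_zero.mp h4 with h | h
    · constructor <;> omega
    · exact absurd h hi₀
  obtain ⟨a₁, a₂, ha12, hS2eq⟩ := Finset.card_eq_two.mp hScard.1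
  obtain ⟨b₁, b₂, hb12, hT2eq⟩ := Finset.card_eq_two.mp hScard.2
  have hwa1 : w a₁ = d := by
    have : a₁ ∈ S2 := hS2eq ▸ Finset.mem_insert_self _ _
    rw [hS2def] at this; exact (Finset.mem_filter.mp this).2
  have hwa2 : w a₂ = d := by
    have : a₂ ∈ S2 := hS2eq ▸ Finset.mem_insert_of_mem (Finset.mem_singleton_self _)
    rw [hS2def] at this; exact (Finset.mem_filter.mp this).2
  have hwb1 : w b₁ = -d := by
    have : b₁ ∈ T2 := hT2eq ▸ Finset.mem_insert_self _ _
    rw [hT2def] at this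
    rcases step b₁ with h | h
    · exact absurd h (Finset.mem_filter.mp this).2
    · exact h
  have hwb2 : w b₂ = -d := by
    have : b₂ ∈ T2 := hT2eq ▸ Finset.mem_insert_of_mem (Finset.mem_singleton_self _)
    rw [hT2def] at this
    rcases step b₂ with h | h
    · exact absurd h (Finset.mem_filter.mp this).2
    · exact h
  have hneq : ∀ x y : Fin 4, w x = d → w y = -d → x ≠ y := by
    intro x y hx hy hxy
    subst hxy
    omega
  have hinj4 : Function.Injective ![a₁, a₂, b₁, b₂] := by
    intro x y hxy
    fin_cases x <;> fin_cases y <;>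
      simp only [Matrix.cons_val_zero, Matrix.cons_val_one, Matrix.head_cons,
        Matrix.cons_val_two, Matrix.tail_cons, Matrix.cons_val_three] at hxy ⊢ <;>
      first
        | rfl
        | exact absurd hxy ha12
        | exact absurd hxy.symm ha12
        | exact absurd hxy hb12
        | exact absurd hxy.symm hb12
        | exact absurd hxy (hneq _ _ hwa1 hwb1)
        | exact absurd hxy (hneq _ _ hwa1 hwb2)
        | exact absurd hxy (hneq _ _ hwa2 hwb1)
        | exact absurd hxy (hneq _ _ hwa2 hwb2)
        | exact absurd hxy.symm (hneq _ _ hwa1 hwb1)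
        | exact absurd hxy.symm (hneq _ _ hwa1 hwb2)
        | exact absurd hxy.symm (hneq _ _ hwa2 hwb1)
        | exact absurd hxy.symm (hneq _ _ hwa2 hwb2)
  let π : Equiv.Perm (Fin 4) := Equiv.ofBijective _ (Finite.injective_iff_bijective.mp hinj4)
  have hπ0 : π 0 = a₁ := rfl
  have hπ1 : π 1 = a₂ := rfl
  have hπ2 : π 2 = b₁ := rfl
  have hπ3 : π 3 = b₂ := rfl
  set A : ℂˣ := Λ a₁ * Λ a₂ with hAdef
  set B : ℂˣ := Λ b₁ * Λ b₂ with hBdef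
  have hABone : A * B = 1 := by
    have hone : (∏ k, Λ k) = 1 := by
      rw [← honev]
      show ∏ k, Λ k = ∏ k, Λ k ^ (1:ℤ)
      exact Finset.prod_congr rfl fun k _ => (zpow_one _).symm
    have h5 : ∏ k, Λ (π k) = 1 := by rw [Equiv.prod_comp π Λ]; exact hone
    rw [Fin.prod_univ_four, hπ0, hπ1, hπ2, hπ3] at h5
    rw [hAdef, hBdef, ← mul_assoc]
    exact h5
  have hrel2 : A ^ d * B ^ (-d) = 1 := by
    have h5 : ∏ k, Λ (π k) ^ w (π k) = 1 := by
      rw [Equiv.prod_comp π (fun m => Λ m ^ w m)]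
      exact hw
    rw [Fin.prod_univ_four, hπ0, hπ1, hπ2, hπ3, hwa1, hwa2, hwb1, hwb2] at h5
    rw [hAdef, hBdef, mul_zpow, mul_zpow, ← mul_assoc]
    exact h5
  have hBA : B = A⁻¹ := eq_inv_of_mul_eq_one_right hABone
  have hA2 : A ^ (2*d) = 1 := by
    rw [hBA, inv_zpow', neg_neg] at hrel2
    rw [two_mul, zpow_add]
    exact hrel2
  have hB2 : B ^ (2*d) = 1 := by
    rw [hBA, inv_zpow, hA2, inv_one]
  set u : ℕ := (2*d).natAbs with hudef
  have hu : 0 < u := Int.natAbs_pos.mpr (by omega)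
  have hAu : A ^ u = 1 := by
    rcases Int.natAbs_eq (2*d) with h | h
    · have h6 : A ^ ((u:ℤ)) = 1 := by rw [hudef, ← h]; exact hA2
      rw [← zpow_natCast A u]; exact h6
    · have h6 : A ^ ((u:ℤ)) = 1 := by
        have h5 : ((u:ℤ)) = -(2*d) := by omega
        rw [h5, zpow_neg, hA2, inv_one]
      rw [← zpow_natCast A u]; exact h6
  have hBu : B ^ u = 1 := by
    rcases Int.natAbs_eq (2*d) with h | h
    · have h6 : B ^ ((u:ℤ)) = 1 := by rw [hudef, ← h]; exact hB2
      rw [← zpow_natCast B u]; exact h6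
    · have h6 : B ^ ((u:ℤ)) = 1 := by
        have h5 : ((u:ℤ)) = -(2*d) := by omega
        rw [h5, zpow_neg, hB2, inv_one]
      rw [← zpow_natCast B u]; exact h6
  refine ⟨u, hu, π, ?_, ?_⟩
  · rw [hπ0, hπ1]
    have h6 : ((A ^ u : ℂˣ) : ℂ) = (lam a₁ * lam a₂) ^ u := by
      rw [Units.val_pow_eq_pow_val]
      congr 1
    rw [← h6, hAu, Units.val_one]
  · rw [hπ2, hπ3]
    have h6 : ((B ^ u : ℂˣ) : ℂ) = (lam b₁ * lam b₂) ^ u := by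
      rw [Units.val_pow_eq_pow_val]
      congr 1
    rw [← h6, hBu, Units.val_one]
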